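/- Let p be an odd prime, σ the permutation x ↦ x+1 and δ the permutation x ↦ x^(p-2) of F_p. If p ≡ 1 (mod 4), then the subgroup of the symmetric group on F_p generated by σ and δ is the full symmetric group. -/

import Mathlib

section T3
variable {α : Type*} [DecidableEq α]

/-- the explicit 3-cycle a → b → c → a -/
def t3 (a b c : α) : Equiv.Perm α := Equiv.swap a c * Equiv.swap a b

theorem t3_apply_of_ne {a b c x : α} (h1 : x ≠ a) (h2 : x ≠ b) (h3 : x ≠ c) :
    t3 a b c x = x := by
  rw [t3, Equiv.Perm.mul_apply, Equiv.swap_apply_of_ne_of_ne h1 h2,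
    Equiv.swap_apply_of_ne_of_ne h1 h3]

theorem t3_apply_left {a b c : α} (hba : b ≠ a) (hbc : b ≠ c) : t3 a b c a = b := by
  rw [t3, Equiv.Perm.mul_apply, Equiv.swap_apply_left, Equiv.swap_apply_of_ne_of_ne hba hbc]

theorem t3_apply_mid (a b c : α) : t3 a b c b = c := by
  rw [t3, Equiv.Perm.mul_apply, Equiv.swap_apply_right, Equiv.swap_apply_left]

theorem t3_apply_right {a b c : α} (hca : c ≠ a) (hcb : c ≠ b) : t3 a b c c = a := by
  rw [t3, Equiv.Perm.mul_apply, Equiv.swap_apply_of_ne_of_ne hca hcb, Equiv.swap_apply_right]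

theorem isThreeCycle_t3 {a b c : α} [Fintype α] (hab : a ≠ b) (hac : a ≠ c) (hbc : b ≠ c) :
    Equiv.Perm.IsThreeCycle (t3 a b c) :=
  Equiv.Perm.isThreeCycle_swap_mul_swap_same hac hab (Ne.symm hbc)

theorem t3_conj (f : Equiv.Perm α) (a b c : α) :
    f * t3 a b c * f⁻¹ = t3 (f a) (f b) (f c) := by
  rw [t3, t3, Equiv.swap_apply_apply, Equiv.swap_apply_apply]
  group

theorem t3_rot {a b c : α} (hab : a ≠ b) (hac : a ≠ c) (hbc : b ≠ c) :
    t3 a b c = t3 b c a := by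
  apply Equiv.ext; intro x
  by_cases hxa : x = a
  · subst hxa; rw [t3_apply_left hab.symm hbc, t3_apply_right hab hac]
  by_cases hxb : x = b
  · subst hxb; rw [t3_apply_mid, t3_apply_left hbc.symm hac.symm]
  by_cases hxc : x = c
  · subst hxc; rw [t3_apply_right hac.symm hbc.symm, t3_apply_mid]
  · rw [t3_apply_of_ne hxa hxb hxc, t3_apply_of_ne hxb hxc hxa]

theorem t3_inv {a b c : α} (hab : a ≠ b) (hac : a ≠ c) (hbc : b ≠ c) :
    (t3 a b c)⁻¹ = t3 a c b := by
  apply inv_eq_of_mul_eq_one_right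
  apply Equiv.ext; intro x
  rw [Equiv.Perm.mul_apply, Equiv.Perm.one_apply]
  by_cases hxa : x = a
  · subst hxa
    rw [t3_apply_left hac.symm hbc.symm, t3_apply_right hac.symm hbc.symm]
  by_cases hxb : x = b
  · subst hxb
    rw [t3_apply_right hab.symm hbc, t3_apply_left hab.symm hbc]
  by_cases hxc : x = c
  · subst hxc
    rw [t3_apply_mid, t3_apply_mid]
  · rw [t3_apply_of_ne hxa hxc hxb, t3_apply_of_ne hxa hxb hxc]

theorem t3_mul {k b x y : α} (hkb : k ≠ b) (hkx : k ≠ x) (hbx : b ≠ x)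
    (hky : k ≠ y) (hby : b ≠ y) (hxy : x ≠ y) :
    t3 k b x * t3 k y b = t3 k y x := by
  apply Equiv.ext; intro z
  rw [Equiv.Perm.mul_apply]
  by_cases hzk : z = k
  · subst hzk
    rw [t3_apply_left hky.symm hby.symm, t3_apply_of_ne hky.symm hby.symm hxy.symm,
      t3_apply_left hky.symm hxy.symm]
  by_cases hzb : z = b
  · subst hzb
    rw [t3_apply_right hkb.symm hby, t3_apply_left hkb.symm hbx,
      t3_apply_of_ne hkb.symm hby hbx]
  by_cases hzx : z = x
  · subst hzx
    rw [t3_apply_of_ne hkx.symm hxy hbx.symm, t3_apply_right hkx.symm hbx.symm,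
      t3_apply_right hkx.symm hxy]
  by_cases hzy : z = y
  · subst hzy
    rw [t3_apply_mid, t3_apply_mid, t3_apply_mid]
  · rw [t3_apply_of_ne hzk hzy hzb, t3_apply_of_ne hzk hzb hzx,
      t3_apply_of_ne hzk hzy hzx]

theorem isThreeCycle_exists_t3 [Fintype α] {f : Equiv.Perm α} (h : f.IsThreeCycle) :
    ∃ a b c, a ≠ b ∧ a ≠ c ∧ b ≠ c ∧ f = t3 a b c := by
  have hcard := h.card_support
  have h1 : f.support.Nonempty := by rw [← Finset.card_pos, hcard]; norm_num
  obtain ⟨a, ha⟩ := h1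
  have hfa : f a ≠ a := Equiv.Perm.mem_support.1 ha
  have hb : f a ∈ f.support := Equiv.Perm.apply_mem_support.2 ha
  have hfb : f (f a) ≠ f a := Equiv.Perm.mem_support.1 hb
  have hc : f (f a) ∈ f.support := Equiv.Perm.apply_mem_support.2 hb
  have h3 : f ^ 3 = 1 := by
    rw [← h.orderOf]; exact pow_orderOf_eq_one f
  set b := f a with hbdef
  set c := f b with hcdef
  have hfc : f c = a := by
    have e : (f ^ 3) a = f (f (f a)) := by
      simp [pow_succ, Equiv.Perm.mul_apply]
    rw [h3] at e
    exact e.symm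
  have hab : a ≠ b := Ne.symm hfa
  have hbc : b ≠ c := Ne.symm hfb
  have hac : a ≠ c := by
    intro h'
    rw [← h'] at hfc
    exact hfa hfc
  refine ⟨a, b, c, hab, hac, hbc, ?_⟩
  have hsub : ({a, b, c} : Finset α) ⊆ f.support := by
    intro x hx
    simp only [Finset.mem_insert, Finset.mem_singleton] at hx
    rcases hx with rfl | rfl | rfl
    · exact ha
    · exact hb
    · exact hc
  have hcard3 : ({a, b, c} : Finset α).card = 3 := by
    rw [Finset.card_insert_of_notMem (by simp [hab, hac]),
      Finset.card_insert_of_notMem (by simp [hbc]), Finset.card_singleton]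
  have hsupp : f.support = {a, b, c} :=
    (Finset.eq_of_subset_of_card_le hsub (by rw [hcard, hcard3])).symm
  apply Equiv.ext; intro x
  by_cases hxa : x = a
  · subst hxa; rw [t3_apply_left hab.symm hbc]
  by_cases hxb : x = b
  · subst hxb; rw [t3_apply_mid]
  by_cases hxc : x = c
  · subst hxc; rw [t3_apply_right hac.symm hbc.symm]; exact hfc
  · have hx : x ∉ f.support := by
      rw [hsupp]; simp [hxa, hxb, hxc]
    rw [Equiv.Perm.notMem_support.1 hx, t3_apply_of_ne hxa hxb hxc]

end T3


theorem stmt_12 (p : ℕ) (hp : p.Prime) (hp4 : p % 4 = 1)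
    (σ δ : Equiv.Perm (ZMod p)) (hσ : ∀ x, σ x = x + 1)
    (hδ : ∀ x, δ x = x ^ (p - 2)) :
    Subgroup.closure {σ, δ} = (⊤ : Subgroup (Equiv.Perm (ZMod p))) := by
  haveI : Fact p.Prime := ⟨hp⟩
  have hp2 := hp.two_le
  have hp5 : 5 ≤ p := by
    rcases Nat.lt_or_ge p 5 with h | h
    · interval_cases p <;> omega
    · exact h
  -- numerals
  have hnat : ∀ n : ℕ, 0 < n → n < p → (n : ZMod p) ≠ 0 := by
    intro n hn hnp h
    rw [ZMod.natCast_eq_zero_iff] at h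
    have := Nat.le_of_dvd hn h
    omega
  have n1 : (1 : ZMod p) ≠ 0 := by
    have := hnat 1 (by omega) (by omega); exact_mod_cast this
  have n2 : (2 : ZMod p) ≠ 0 := by
    have := hnat 2 (by omega) (by omega); exact_mod_cast this
  have n3 : (3 : ZMod p) ≠ 0 := by
    have := hnat 3 (by omega) (by omega); exact_mod_cast this
  have n4 : (4 : ZMod p) ≠ 0 := by
    have := hnat 4 (by omega) (by omega); exact_mod_cast this
  -- delta is inversion
  have hδ' : ∀ x : ZMod p, δ x = x⁻¹ := by
    intro x
    rw [hδ]
    by_cases hx : x = 0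
    · subst hx
      rw [zero_pow (by omega), inv_zero]
    · apply eq_inv_of_mul_eq_one_left
      have : x ^ (p - 2) * x = x ^ (p - 1) := by
        rw [← pow_succ]
        congr 1
        omega
      rw [this, ZMod.pow_card_sub_one_eq_one hx]
  have hσ' : ∀ x : ZMod p, σ⁻¹ x = x - 1 := by
    intro x
    have h1 : σ (x - 1) = x := by rw [hσ]; ring
    calc σ⁻¹ x = σ⁻¹ (σ (x - 1)) := by rw [h1]
    _ = x - 1 := Equiv.symm_apply_apply σ _
  set K := Subgroup.closure ({σ, δ} : Set (Equiv.Perm (ZMod p))) with hK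
  have hσK : σ ∈ K := Subgroup.subset_closure (Set.mem_insert _ _)
  have hδK : δ ∈ K := Subgroup.subset_closure (Set.mem_insert_of_mem _ rfl)
  -- the magic word
  set V : Equiv.Perm (ZMod p) := δ * σ⁻¹ * δ * σ * σ with hVdef
  have hVK : V ∈ K := mul_mem (mul_mem (mul_mem (mul_mem hδK (inv_mem hσK)) hδK) hσK) hσK
  have hVapp : ∀ x : ZMod p, V x = ((x + 1 + 1)⁻¹ - 1)⁻¹ := by
    intro x
    simp only [hVdef, Equiv.Perm.mul_apply, hσ, hσ', hδ']
  have hVx : ∀ x : ZMod p, x ≠ -2 → V x = (x + 2) * (-1 - x)⁻¹ := by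
    intro x hx
    have hx2 : x + 2 ≠ 0 := fun h => hx (by linear_combination h)
    rw [hVapp]
    have e2 : x + 1 + 1 = x + 2 := by ring
    rw [e2]
    by_cases h1 : x = -1
    · subst h1; norm_num
    · have h1' : -1 - x ≠ 0 := fun h => h1 (by linear_combination -h)
      have key : (x + 2)⁻¹ - 1 = (-1 - x) * (x + 2)⁻¹ := by
        field_simp
        ring
      rw [key, mul_inv_rev, inv_inv]
  have hVm2 : V (-2) = -1 := by
    rw [hVapp]
    norm_num
  have hV0 : V 0 = -2 := by
    rw [hVx 0 (fun h => n2 (by linear_combination h))]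
    norm_num
  have hVm1 : V (-1) = 0 := by
    rw [hVx (-1) (fun h => n1 (by linear_combination h))]
    norm_num
  -- distinctness of 0, -1, -2
  have d01 : (0 : ZMod p) ≠ -1 := fun h => n1 (by linear_combination h)
  have d02 : (0 : ZMod p) ≠ -2 := fun h => n2 (by linear_combination h)
  have d12 : (-1 : ZMod p) ≠ -2 := fun h => n1 (by linear_combination h)
  have hc0 : V * V = t3 (0 : ZMod p) (-1) (-2) := by
    apply Equiv.ext; intro x
    rw [Equiv.Perm.mul_apply]
    by_cases h0 : x = 0
    · subst h0
      rw [hV0, hVm2, t3_apply_left d01.symm d12]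
    by_cases h1 : x = -1
    · subst h1
      rw [hVm1, hV0, t3_apply_mid]
    by_cases h2x : x = -2
    · subst h2x
      rw [hVm2, hVm1, t3_apply_right d02.symm d12.symm]
    · have hVxe := hVx x h2x
      have h1' : -1 - x ≠ 0 := fun h => h1 (by linear_combination -h)
      have hne : V x ≠ -2 := by
        rw [hVxe]
        intro h
        apply h0
        field_simp at h
        linear_combination -h
      rw [hVx _ hne, hVxe]
      rw [t3_apply_of_ne h0 h1 h2x]
      have eA : (x + 2) * (-1 - x)⁻¹ + 2 = (-x) * (-1 - x)⁻¹ := by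
        field_simp
        ring
      have eB : -1 - (x + 2) * (-1 - x)⁻¹ = -((-1 - x)⁻¹) := by
        field_simp
        ring
      rw [eA, eB, inv_neg, inv_inv]
      field_simp
  have hcK : t3 (0 : ZMod p) (-1) (-2) ∈ K := hc0 ▸ mul_mem hVK hVK
  -- shifting
  have hσn : ∀ (n : ℕ) (x : ZMod p), (σ ^ n) x = x + n := by
    intro n
    induction n with
    | zero => intro x; simp
    | succ m ih =>
      intro x
      rw [pow_succ, Equiv.Perm.mul_apply, hσ, ih]
      push_cast
      ring
  have hshift : ∀ k a b c : ZMod p, t3 a b c ∈ K → t3 (a + k) (b + k) (c + k) ∈ K := by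
    intro k a b c h
    have hm : σ ^ k.val * t3 a b c * (σ ^ k.val)⁻¹ ∈ K :=
      mul_mem (mul_mem (pow_mem hσK _) h) (inv_mem (pow_mem hσK _))
    rw [t3_conj] at hm
    rw [hσn, hσn, hσn, ZMod.natCast_rightInverse k] at hm
    exact hm
  have hshift' : ∀ k : ZMod p, t3 k (k - 1) (k - 2) ∈ K := by
    intro k
    have := hshift k 0 (-1) (-2) hcK
    have e1 : (0 : ZMod p) + k = k := by ring
    have e2 : (-1 : ZMod p) + k = k - 1 := by ring
    have e3 : (-2 : ZMod p) + k = k - 2 := by ring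
    rw [e1, e2, e3] at this
    exact this
  -- induction: t3 0 (-1) (-n) ∈ K for 2 ≤ n ≤ p-2
  have hind : ∀ n : ℕ, 2 ≤ n → n ≤ p - 2 → t3 (0 : ZMod p) (-1) (-(n : ZMod p)) ∈ K := by
    intro n
    induction n with
    | zero => intro h _; omega
    | succ m ih =>
      intro h2 hub
      rcases Nat.lt_or_ge m 2 with hm | hm
      · have hm1 : m = 1 := by omega
        subst hm1
        have e : ((2 : ℕ) : ZMod p) = 2 := by norm_cast
        rw [e]
        exact hcK
      · have prev := ih (by omega) (by omega)
        have hA0 : (m : ZMod p) ≠ 0 := hnat m (by omega) (by omega)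
        have hA1 : (m : ZMod p) ≠ 1 := by
          intro h
          apply hnat (m - 1) (by omega) (by omega)
          rw [Nat.cast_sub (by omega : 1 ≤ m), Nat.cast_one]
          linear_combination h
        have hAp1 : (m : ZMod p) + 1 ≠ 0 := by
          intro h
          apply hnat (m + 1) (by omega) (by omega)
          push_cast
          linear_combination h
        have hAp2 : (m : ZMod p) + 2 ≠ 0 := by
          intro h
          apply hnat (m + 2) (by omega) (by omega)
          push_cast
          linear_combination h
        set k : ZMod p := -(m : ZMod p) with hk
        have hW : t3 k (k - 1) (k - 2) ∈ K := hshift' k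
        have conj := mul_mem (mul_mem hW prev) (inv_mem hW)
        rw [t3_conj] at conj
        have ew0 : t3 k (k - 1) (k - 2) 0 = 0 := by
          apply t3_apply_of_ne
          · intro h; rw [hk] at h; exact hA0 (by linear_combination h)
          · intro h; rw [hk] at h; exact hAp1 (by linear_combination h)
          · intro h; rw [hk] at h; exact hAp2 (by linear_combination h)
        have ew1 : t3 k (k - 1) (k - 2) (-1) = -1 := by
          apply t3_apply_of_ne
          · intro h; rw [hk] at h; exact hA1 (by linear_combination h)
          · intro h; rw [hk] at h; exact hA0 (by linear_combination h)
          · intro h; rw [hk] at h; exact hAp1 (by linear_combination h)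
        have ewk : t3 k (k - 1) (k - 2) k = k - 1 :=
          t3_apply_left (fun h => n1 (by linear_combination -h)) (fun h => n1 (by linear_combination h))
        rw [ew0, ew1, ewk] at conj
        have ekk : k - 1 = -((m + 1 : ℕ) : ZMod p) := by
          rw [hk]; push_cast; ring
        rw [ekk] at conj
        exact conj
  have hbase' : ∀ x : ZMod p, x ≠ 0 → x ≠ -1 → x ≠ 1 → t3 (0 : ZMod p) (-1) x ∈ K := by
    intro x h0 h1 hx1
    have hv0 : (-x) ≠ 0 := fun h => h0 (by linear_combination -h)
    have hval0 : (-x).val ≠ 0 := fun h => hv0 ((ZMod.val_eq_zero _).1 h)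
    have hvlt : (-x).val < p := ZMod.val_lt _
    have hcast : (((-x).val : ℕ) : ZMod p) = -x := ZMod.natCast_rightInverse _
    have hval1 : (-x).val ≠ 1 := by
      intro h
      apply h1
      have e : (((-x).val : ℕ) : ZMod p) = ((1 : ℕ) : ZMod p) := by rw [h]
      rw [hcast, Nat.cast_one] at e
      linear_combination -e
    have hvalp1 : (-x).val ≠ p - 1 := by
      intro h
      apply hx1
      have e : (((-x).val : ℕ) : ZMod p) = ((p - 1 : ℕ) : ZMod p) := by rw [h]
      have hp1 : ((p - 1 : ℕ) : ZMod p) = -1 := by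
        rw [Nat.cast_sub (by omega : 1 ≤ p), ZMod.natCast_self, Nat.cast_one]
        ring
      rw [hcast, hp1] at e
      linear_combination -e
    have hres := hind (-x).val (by omega) (by omega)
    rw [hcast, neg_neg] at hres
    exact hres
  have hbase1 : t3 (0 : ZMod p) (-1) (1 : ZMod p) ∈ K := by
    have hu : t3 (0 : ZMod p) (-1) (2 : ZMod p) ∈ K :=
      hbase' 2 n2 (fun h => n3 (by linear_combination h)) (fun h => n1 (by linear_combination h))
    have hw : t3 (3 : ZMod p) 2 1 ∈ K := by
      have hsh := hshift 3 0 (-1) (-2) hcK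
      rw [show (0 : ZMod p) + 3 = 3 by ring, show (-1 : ZMod p) + 3 = 2 by ring,
        show (-2 : ZMod p) + 3 = 1 by ring] at hsh
      exact hsh
    have conj := mul_mem (mul_mem hw hu) (inv_mem hw)
    rw [t3_conj] at conj
    have e0 : t3 (3 : ZMod p) 2 1 0 = 0 :=
      t3_apply_of_ne (fun h => n3 (by linear_combination -h))
        (fun h => n2 (by linear_combination -h)) (fun h => n1 (by linear_combination -h))
    have e1 : t3 (3 : ZMod p) 2 1 (-1) = -1 :=
      t3_apply_of_ne (fun h => n4 (by linear_combination -h))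
        (fun h => n3 (by linear_combination -h)) (fun h => n2 (by linear_combination -h))
    have e2 : t3 (3 : ZMod p) 2 1 2 = 1 := t3_apply_mid _ _ _
    rw [e0, e1, e2] at conj
    exact conj
  have hbase : ∀ x : ZMod p, x ≠ 0 → x ≠ -1 → t3 (0 : ZMod p) (-1) x ∈ K := by
    intro x h0 h1
    by_cases hx1 : x = 1
    · subst hx1; exact hbase1
    · exact hbase' x h0 h1 hx1
  have fam : ∀ k x : ZMod p, x ≠ k → x ≠ k - 1 → t3 k (k - 1) x ∈ K := by
    intro k x hxk hxk1
    have h0 : x - k ≠ 0 := sub_ne_zero_of_ne hxk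
    have h1 : x - k ≠ -1 := fun h => hxk1 (by linear_combination h)
    have hsh := hshift k 0 (-1) (x - k) (hbase _ h0 h1)
    rw [show (0 : ZMod p) + k = k by ring, show (-1 : ZMod p) + k = k - 1 by ring,
      show x - k + k = x by ring] at hsh
    exact hsh
  have pair : ∀ k x y : ZMod p, x ≠ k → x ≠ k - 1 → y ≠ k → y ≠ k - 1 → x ≠ y →
      t3 k y x ∈ K := by
    intro k x y hxk hxk1 hyk hyk1 hxy
    have h1 := fam k x hxk hxk1
    have h2 := fam k y hyk hyk1
    have hk1 : k ≠ k - 1 := fun h => n1 (by linear_combination h)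
    have hmem : t3 k (k - 1) x * (t3 k (k - 1) y)⁻¹ ∈ K := mul_mem h1 (inv_mem h2)
    rw [t3_inv hk1 (Ne.symm hyk) (Ne.symm hyk1),
      t3_mul hk1 (Ne.symm hxk) (Ne.symm hxk1) (Ne.symm hyk) (Ne.symm hyk1) hxy] at hmem
    exact hmem
  have all3 : ∀ a b c : ZMod p, a ≠ b → a ≠ c → b ≠ c → t3 a b c ∈ K := by
    intro a b c hab hac hbc
    by_cases hb : b = a - 1
    · subst hb
      exact fam a c (Ne.symm hac) (Ne.symm hbc)
    · by_cases hc : c = a - 1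
      · by_cases hb2 : b = a - 2
        · subst hb2; subst hc
          rw [t3_rot hab hac hbc]
          exact pair (a - 2) a (a - 1) (fun h => n2 (by linear_combination h))
            (fun h => n3 (by linear_combination h)) (fun h => n1 (by linear_combination h))
            (fun h => n2 (by linear_combination h)) hac
        · subst hc
          rw [t3_rot hab hac hbc, t3_rot hbc (Ne.symm hab) (Ne.symm hac)]
          exact pair (a - 1) b a hb (fun h => hb2 (by linear_combination h))
            (fun h => n1 (by linear_combination h)) (fun h => n2 (by linear_combination h))
            (Ne.symm hab)
      · exact pair a c b (Ne.symm hac) hc (Ne.symm hab) hb (Ne.symm hbc)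
  -- the alternating group is contained in K
  have hAlt : alternatingGroup (ZMod p) ≤ K := by
    rw [← Equiv.Perm.closure_three_cycles_eq_alternating, Subgroup.closure_le]
    rintro f hf
    obtain ⟨a, b, c, hab, hac, hbc, rfl⟩ := isThreeCycle_exists_t3 hf
    exact all3 a b c hab hac hbc
  -- the sign of δ is -1
  have hδ2 : δ * δ = 1 := by
    apply Equiv.ext; intro x
    rw [Equiv.Perm.mul_apply, hδ', hδ', inv_inv, Equiv.Perm.one_apply]
  have hδne1 : δ ≠ 1 := by
    intro h
    have h2' := hδ' 2
    rw [h, Equiv.Perm.one_apply] at h2'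
    have h22 : (2 : ZMod p) * 2 = 1 := by
      nth_rewrite 1 [h2']
      exact inv_mul_cancel₀ n2
    exact n3 (by linear_combination h22)
  have hord : orderOf δ = 2 := by
    apply orderOf_eq_prime
    · rw [pow_two]; exact hδ2
    · exact hδne1
  have hct2 : ∀ n ∈ δ.cycleType, n = 2 := by
    intro n hn
    have h2le := Equiv.Perm.two_le_of_mem_cycleType hn
    have hdvd : n ∣ 2 := by
      rw [← hord, ← Equiv.Perm.lcm_cycleType]
      exact Multiset.dvd_lcm hn
    have := Nat.le_of_dvd (by norm_num) hdvd
    omega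
  have hrep := Multiset.eq_replicate_of_mem hct2
  have hsum2 : δ.cycleType.sum = 2 * Multiset.card δ.cycleType := by
    conv_lhs => rw [hrep]
    rw [Multiset.sum_replicate, smul_eq_mul]
    ring
  have hfix : ∀ x : ZMod p, x⁻¹ = x ↔ (x = 0 ∨ x = 1 ∨ x = -1) := by
    intro x
    constructor
    · intro h
      by_cases hx : x = 0
      · exact Or.inl hx
      · have hxx : x * x = 1 := by
          nth_rewrite 2 [← h]
          exact mul_inv_cancel₀ hx
        have hfac : (x - 1) * (x + 1) = 0 := by linear_combination hxx
        rcases mul_eq_zero.1 hfac with h' | h'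
        · exact Or.inr (Or.inl (by linear_combination h'))
        · exact Or.inr (Or.inr (by linear_combination h'))
    · rintro (rfl | rfl | rfl)
      · exact inv_zero
      · exact inv_one
      · rw [inv_neg, inv_one]
  have hsupp : δ.support = Finset.univ \ {0, 1, -1} := by
    ext x
    rw [Equiv.Perm.mem_support, Finset.mem_sdiff]
    simp only [Finset.mem_univ, true_and, Finset.mem_insert, Finset.mem_singleton]
    rw [hδ']
    constructor
    · intro h hmem; exact h ((hfix x).2 hmem)
    · intro h hx; exact h ((hfix x).1 hx)
  have h01 : (0 : ZMod p) ∉ ({1, -1} : Finset (ZMod p)) := by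
    simp only [Finset.mem_insert, Finset.mem_singleton]
    push_neg
    exact ⟨fun h => n1 (by linear_combination -h), fun h => n1 (by linear_combination h)⟩
  have h11 : (1 : ZMod p) ∉ ({-1} : Finset (ZMod p)) := by
    simp only [Finset.mem_singleton]
    exact fun h => n2 (by linear_combination h)
  have hcard13 : ({0, 1, -1} : Finset (ZMod p)).card = 3 := by
    rw [Finset.card_insert_of_notMem h01, Finset.card_insert_of_notMem h11,
      Finset.card_singleton]
  have hcards : δ.support.card = p - 3 := by
    rw [hsupp, Finset.card_sdiff_of_subset (Finset.subset_univ _), hcard13, Finset.card_univ, ZMod.card]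
  have hsign : Equiv.Perm.sign δ = -1 := by
    rw [Equiv.Perm.sign_of_cycleType]
    have hs : δ.cycleType.sum = p - 3 := by rw [Equiv.Perm.sum_cycleType, hcards]
    have hm2 : 2 * Multiset.card δ.cycleType = p - 3 := by rw [← hsum2, hs]
    have hodd : Odd (δ.cycleType.sum + Multiset.card δ.cycleType) := by
      rw [hs, Nat.odd_iff]
      omega
    exact Odd.neg_one_pow hodd
  -- finish
  rw [eq_top_iff]
  intro g _
  rcases Int.units_eq_one_or (Equiv.Perm.sign g) with hg | hg
  · exact hAlt (Equiv.Perm.mem_alternatingGroup.2 hg)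
  · have hgδ : g * δ ∈ alternatingGroup (ZMod p) := by
      rw [Equiv.Perm.mem_alternatingGroup, map_mul, hg, hsign]
      norm_num
    have hmem := mul_mem (hAlt hgδ) (inv_mem hδK)
    rwa [mul_inv_cancel_right] at hmem
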